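/- For every k ≥ 2, 1 ≤ i ≤ k−1, and x₀ = ±2 sin((i − 1/2)π/(2k−1)), one has x₀ · U_{k-2}(1 − x₀²/2) = ±(−1)^{i+1}. -/

import Mathlib

open Polynomial Polynomial.Chebyshev Real

theorem xU_at_roots (k : ℕ) (hk : 2 ≤ k) (i : ℕ) (hi : i ∈ Finset.Icc 1 (k - 1))
    (ε : ℝ) (hε : ε = 1 ∨ ε = -1)
    (x₀ : ℝ) (hx₀ : x₀ = ε * 2 * Real.sin (((i : ℝ) - 1 / 2) * Real.pi / (2 * (k : ℝ) - 1))) :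
    x₀ * (Chebyshev.U ℝ ((k : ℤ) - 2)).eval (1 - x₀ ^ 2 / 2) = ε * (-1) ^ (i + 1) := by
  simp only [Finset.mem_Icc] at hi
  obtain ⟨hi1, hi2⟩ := hi
  set θ : ℝ := ((i : ℝ) - 1 / 2) * Real.pi / (2 * (k : ℝ) - 1) with hθdef
  have hk2 : (2 : ℝ) ≤ (k : ℝ) := by exact_mod_cast hk
  have hik : (i : ℝ) ≤ (k : ℝ) - 1 := by
    have : (i : ℝ) ≤ ((k - 1 : ℕ) : ℝ) := by exact_mod_cast hi2
    push_cast [Nat.cast_sub (by omega : 1 ≤ k)] at this; linarith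
  have hi1' : (1 : ℝ) ≤ (i : ℝ) := by exact_mod_cast hi1
  have hden : (0 : ℝ) < 2 * (k : ℝ) - 1 := by linarith
  have hθpos : 0 < θ := by
    apply div_pos (mul_pos (by linarith) Real.pi_pos) hden
  have hθlt : θ < Real.pi / 2 := by
    rw [hθdef, div_lt_div_iff₀ hden (by norm_num)]
    nlinarith [Real.pi_pos]
  have hcos : 0 < Real.cos θ := Real.cos_pos_of_mem_Ioo ⟨by linarith, hθlt⟩
  have hsin : 0 < Real.sin θ := Real.sin_pos_of_pos_of_lt_pi hθpos (by linarith [Real.pi_pos])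
  have hε2 : ε ^ 2 = 1 := by rcases hε with h | h <;> simp [h]
  have hpt : 1 - x₀ ^ 2 / 2 = Real.cos (2 * θ) := by
    have h2 := Real.sin_sq_add_cos_sq θ
    rw [hx₀, Real.cos_two_mul]
    nlinarith [hε2, h2]
  have harg : ((((k : ℤ) - 2 : ℤ) : ℝ) + 1) * (2 * θ) = (i : ℝ) * Real.pi - (Real.pi / 2 + θ) := by
    rw [hθdef]
    push_cast
    field_simp [hden.ne', show (k : ℝ) * 2 - 1 ≠ 0 by linarith]
    ring
  have hsin2 : Real.sin (((((k : ℤ) - 2 : ℤ) : ℝ) + 1) * (2 * θ)) = (-1) ^ (i + 1) * Real.cos θ := by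
    rw [harg, Real.sin_nat_mul_pi_sub, Real.sin_add, pow_succ]
    simp
  have hU := Polynomial.Chebyshev.U_real_cos (2 * θ) ((k : ℤ) - 2)
  rw [Real.sin_two_mul, hsin2] at hU
  have h1 : (Chebyshev.U ℝ ((k : ℤ) - 2)).eval (Real.cos (2 * θ)) * (2 * Real.sin θ)
      = (-1) ^ (i + 1) :=
    mul_right_cancel₀ (ne_of_gt hcos) (by linear_combination hU)
  rw [hpt, hx₀]
  linear_combination ε * h1
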